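/- In ℝ⁶ with coordinates (λ₁,λ₂,λ₃,β₁,β₂,β₃), define the vectors b = (1,0,−1,0,0,0), a₁ = (2,−1,−1,2,−1,−1), a₂ = (2,−1,−1,−1,2,−1), a₃ = (2,−1,−1,−1,−1,2), c₁ = (1,1,−2,−2,1,1), c₂ = (1,1,−2,1,−2,1), c₃ = (1,1,−2,1,1,−2), and for vectors v₁,…,v₄ let pos(v₁,…,v₄) denote the set of their linear combinations with nonnegative real coefficients. Then for all λ, β ∈ ℤ³ with λ₁+λ₂+λ₃ = 0 and β₁+β₂+β₃ = 0, the weight multiplicity m_λ(β) (the number of Gelfand–Tsetlin patterns with top row λ and weight β) satisfies: if (λ,β) ∈ pos(b,a₁,a₂,a₃) then m_λ(β) = 1+λ₂−λ₃; if (λ,β) ∈ pos(b,c₁,c₂,c₃) then m_λ(β) = 1+λ₁−λ₂; if (λ,β) ∈ pos(b,a₁,c₂,c₃) then m_λ(β) = 1+λ₁−β₁; if (λ,β) ∈ pos(b,a₂,c₁,c₃) then m_λ(β) = 1+λ₁−β₂; if (λ,β) ∈ pos(b,a₃,c₁,c₂) then m_λ(β) = 1+λ₁−β₃; if (λ,β)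 ∈ pos(b,a₁,a₂,c₃) then m_λ(β) = 1+λ₁+λ₂+β₃; if (λ,β) ∈ pos(b,a₁,a₃,c₂) then m_λ(β) = 1+λ₁+λ₂+β₂; if (λ,β) ∈ pos(b,a₂,a₃,c₁) then m_λ(β) = 1+λ₁+λ₂+β₁. -/
import Mathlib


/-- A Gelfand–Tsetlin pattern with top row `lam : Fin k → ℤ`, encoded as a function
`x : ℕ → ℕ → ℤ` where row `i` (for `i < k`) has entries `x i 0, …, x i i`
(so row `i` is the row of length `i+1` of the pattern, the top row being row `k-1`),
and all entries outside the triangle are `0`. -/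
def IsGTPattern (k : ℕ) (lam : Fin k → ℤ) (x : ℕ → ℕ → ℤ) : Prop :=
  (∀ j : Fin k, x (k - 1) j.1 = lam j) ∧
  (∀ i j : ℕ, i + 1 < k → j ≤ i →
      x i j ≤ x (i + 1) j ∧ x (i + 1) (j + 1) ≤ x i j) ∧
  (∀ i j : ℕ, k ≤ i ∨ i < j → x i j = 0)

/-- The pattern `x` has weight `beta`: the sum of the row of length `m+1`
equals `beta 0 + ⋯ + beta m`. -/
def GTHasWeight (k : ℕ) (beta : Fin k → ℤ) (x : ℕ → ℕ → ℤ) : Prop :=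
  ∀ m : Fin k, (∑ j ∈ Finset.range (m.1 + 1), x m.1 j)
    = ∑ j : Fin k, if j.1 ≤ m.1 then beta j else 0

/-- The weight multiplicity `m_λ(β)`: the number of Gelfand–Tsetlin patterns with
top row `lam` and weight `beta`. -/
noncomputable def gtMult (k : ℕ) (lam beta : Fin k → ℤ) : ℕ :=
  Set.ncard {x : ℕ → ℕ → ℤ | IsGTPattern k lam x ∧ GTHasWeight k beta x}


/-- The cone spanned by four vectors in `ℝ⁶`: all linear combinations with nonnegative
real coefficients. -/
def pos4 (v₁ v₂ v₃ v₄ : Fin 6 → ℝ) : Set (Fin 6 → ℝ) :=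
  {x | ∃ c₁ c₂ c₃ c₄ : ℝ, 0 ≤ c₁ ∧ 0 ≤ c₂ ∧ 0 ≤ c₃ ∧ 0 ≤ c₄ ∧
    x = c₁ • v₁ + c₂ • v₂ + c₃ • v₃ + c₄ • v₄}

def gtF (lam beta : Fin 3 → ℤ) (t : ℤ) : ℕ → ℕ → ℤ := fun i j =>
  if i = 0 then (if j = 0 then beta 0 else 0)
  else if i = 1 then (if j = 0 then t else if j = 1 then beta 0 + beta 1 - t else 0)
  else if i = 2 then (if j = 0 then lam 0 else if j = 1 then lam 1 else if j = 2 then lam 2 else 0)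
  else 0

lemma gtMult_eq (lam beta : Fin 3 → ℤ) (hl : lam 0 + lam 1 + lam 2 = 0)
    (hb : beta 0 + beta 1 + beta 2 = 0) :
    gtMult 3 lam beta =
      (min (lam 0) (beta 0 + beta 1 - lam 2) + 1 -
        max (max (lam 1) (beta 0 + beta 1 - lam 1)) (max (beta 0) (beta 1))).toNat := by
  have hinj : Function.Injective (gtF lam beta) := fun s t h => by
    simpa [gtF] using congrFun (congrFun h 1) 0
  have hset : {x : ℕ → ℕ → ℤ | IsGTPattern 3 lam x ∧ GTHasWeight 3 beta x} =
      gtF lam beta '' Set.Icc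
        (max (max (lam 1) (beta 0 + beta 1 - lam 1)) (max (beta 0) (beta 1)))
        (min (lam 0) (beta 0 + beta 1 - lam 2)) := by
    ext x
    simp only [Set.mem_setOf_eq, Set.mem_image, Set.mem_Icc]
    constructor
    · rintro ⟨⟨h1, h2, h3⟩, hw⟩
      have e20 : x 2 0 = lam 0 := h1 0
      have e21 : x 2 1 = lam 1 := h1 1
      have e22 : x 2 2 = lam 2 := h1 2
      have w0 := hw 0
      have w1 := hw 1
      simp [Fin.sum_univ_three, Finset.sum_range_succ] at w0 w1
      obtain ⟨q1, q2⟩ := h2 0 0 (by norm_num) (le_refl 0)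
      obtain ⟨q3, q4⟩ := h2 1 0 (by norm_num) (by norm_num)
      obtain ⟨q5, q6⟩ := h2 1 1 (by norm_num) (le_refl 1)
      norm_num at q1 q2 q3 q4 q5 q6
      refine ⟨x 1 0, ⟨?_, ?_⟩, ?_⟩
      · omega
      · omega
      · funext i j
        rcases i with _ | _ | _ | i
        · rcases j with _ | j
          · simpa [gtF] using w0.symm
          · simpa [gtF] using (h3 0 (j+1) (Or.inr (by omega))).symm
        · rcases j with _ | _ | j
          · simp [gtF]
          · simp only [gtF]; norm_num; omega
          · simpa [gtF] using (h3 1 (j+2) (Or.inr (by omega))).symm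
        · rcases j with _ | _ | _ | j
          · simpa [gtF] using e20.symm
          · simpa [gtF] using e21.symm
          · simpa [gtF] using e22.symm
          · simpa [gtF] using (h3 2 (j+3) (Or.inr (by omega))).symm
        · simpa [gtF] using (h3 (i+3) j (Or.inl (by omega))).symm
    · rintro ⟨t, ⟨hL, hU⟩, rfl⟩
      refine ⟨⟨?_, ?_, ?_⟩, ?_⟩
      · intro j; fin_cases j <;> simp [gtF]
      · intro i j hik hji
        have hi2 : i < 2 := by omega
        have hj2 : j < 2 := by omega
        interval_cases i <;> interval_cases j <;> simp [gtF] <;> omega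
      · intro i j hij
        simp only [gtF]
        rcases hij with h | h <;> split_ifs <;> first | rfl | omega | (exfalso; omega)
      · intro m
        fin_cases m <;>
          simp [gtF, Fin.sum_univ_three, Finset.sum_range_succ] <;> omega
  rw [gtMult, hset, Set.ncard_image_of_injective _ hinj, ← Finset.coe_Icc,
    Set.ncard_coe_finset, Int.card_Icc]

set_option maxHeartbeats 1000000 in
/-- The chamber complex of the weight multiplicity function of `sl₃`: on each of the eight
maximal cones (in `(λ,β)`-coordinates) spanned by `b, a₁, a₂, a₃, c₁, c₂, c₃`, the weight
multiplicity `m_λ(β)` is given by the stated linear polynomial. -/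
theorem sl3_chamber_complex_polynomials (lam beta : Fin 3 → ℤ)
    (hl : lam 0 + lam 1 + lam 2 = 0) (hb : beta 0 + beta 1 + beta 2 = 0) :
    let b : Fin 6 → ℝ := ![1, 0, -1, 0, 0, 0]
    let a₁ : Fin 6 → ℝ := ![2, -1, -1, 2, -1, -1]
    let a₂ : Fin 6 → ℝ := ![2, -1, -1, -1, 2, -1]
    let a₃ : Fin 6 → ℝ := ![2, -1, -1, -1, -1, 2]
    let c₁ : Fin 6 → ℝ := ![1, 1, -2, -2, 1, 1]
    let c₂ : Fin 6 → ℝ := ![1, 1, -2, 1, -2, 1]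
    let c₃ : Fin 6 → ℝ := ![1, 1, -2, 1, 1, -2]
    let z : Fin 6 → ℝ :=
      ![(lam 0 : ℝ), (lam 1 : ℝ), (lam 2 : ℝ), (beta 0 : ℝ), (beta 1 : ℝ), (beta 2 : ℝ)]
    (z ∈ pos4 b a₁ a₂ a₃ → (gtMult 3 lam beta : ℤ) = 1 + lam 1 - lam 2) ∧
    (z ∈ pos4 b c₁ c₂ c₃ → (gtMult 3 lam beta : ℤ) = 1 + lam 0 - lam 1) ∧
    (z ∈ pos4 b a₁ c₂ c₃ → (gtMult 3 lam beta : ℤ) = 1 + lam 0 - beta 0) ∧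
    (z ∈ pos4 b a₂ c₁ c₃ → (gtMult 3 lam beta : ℤ) = 1 + lam 0 - beta 1) ∧
    (z ∈ pos4 b a₃ c₁ c₂ → (gtMult 3 lam beta : ℤ) = 1 + lam 0 - beta 2) ∧
    (z ∈ pos4 b a₁ a₂ c₃ → (gtMult 3 lam beta : ℤ) = 1 + lam 0 + lam 1 + beta 2) ∧
    (z ∈ pos4 b a₁ a₃ c₂ → (gtMult 3 lam beta : ℤ) = 1 + lam 0 + lam 1 + beta 1) ∧
    (z ∈ pos4 b a₂ a₃ c₁ → (gtMult 3 lam beta : ℤ) = 1 + lam 0 + lam 1 + beta 0) := by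
  intro b a₁ a₂ a₃ c₁ c₂ c₃ z
  refine ⟨?_, ?_, ?_, ?_, ?_, ?_, ?_, ?_⟩
  · rintro ⟨d₁, d₂, d₃, d₄, h₁, h₂, h₃, h₄, heq⟩
    have E0 := congrFun heq 0
    have E1 := congrFun heq 1
    have E2 := congrFun heq 2
    have E3 := congrFun heq 3
    have E4 := congrFun heq 4
    have E5 := congrFun heq 5
    simp [z, b, a₁, a₂, a₃] at E0 E1 E2 E3 E4 E5
    have I0 : lam 1 ≤ (beta 0 + beta 1) - lam 1 := by
      have : (((lam 1 : ℤ) : ℝ)) ≤ ((((beta 0 : ℤ) : ℝ) + ((beta 1 : ℤ) : ℝ)) - ((lam 1 : ℤ) : ℝ)) := by push_cast; linarith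
      exact_mod_cast this
    have I1 : beta 0 ≤ (beta 0 + beta 1) - lam 1 := by
      have : (((beta 0 : ℤ) : ℝ)) ≤ ((((beta 0 : ℤ) : ℝ) + ((beta 1 : ℤ) : ℝ)) - ((lam 1 : ℤ) : ℝ)) := by push_cast; linarith
      exact_mod_cast this
    have I2 : beta 1 ≤ (beta 0 + beta 1) - lam 1 := by
      have : (((beta 1 : ℤ) : ℝ)) ≤ ((((beta 0 : ℤ) : ℝ) + ((beta 1 : ℤ) : ℝ)) - ((lam 1 : ℤ) : ℝ)) := by push_cast; linarith
      exact_mod_cast this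
    have I3 : (beta 0 + beta 1) - lam 2 ≤ lam 0 := by
      have : ((((beta 0 : ℤ) : ℝ) + ((beta 1 : ℤ) : ℝ)) - ((lam 2 : ℤ) : ℝ)) ≤ (((lam 0 : ℤ) : ℝ)) := by push_cast; linarith
      exact_mod_cast this
    have I4 : lam 2 ≤ lam 1 := by
      have : (((lam 2 : ℤ) : ℝ)) ≤ (((lam 1 : ℤ) : ℝ)) := by push_cast; linarith
      exact_mod_cast this
    rw [gtMult_eq lam beta hl hb]
    omega
  · rintro ⟨d₁, d₂, d₃, d₄, h₁, h₂, h₃, h₄, heq⟩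
    have E0 := congrFun heq 0
    have E1 := congrFun heq 1
    have E2 := congrFun heq 2
    have E3 := congrFun heq 3
    have E4 := congrFun heq 4
    have E5 := congrFun heq 5
    simp [z, b, c₁, c₂, c₃] at E0 E1 E2 E3 E4 E5
    have I0 : (beta 0 + beta 1) - lam 1 ≤ lam 1 := by
      have : ((((beta 0 : ℤ) : ℝ) + ((beta 1 : ℤ) : ℝ)) - ((lam 1 : ℤ) : ℝ)) ≤ (((lam 1 : ℤ) : ℝ)) := by push_cast; linarith
      exact_mod_cast this
    have I1 : beta 0 ≤ lam 1 := by
      have : (((beta 0 : ℤ) : ℝ)) ≤ (((lam 1 : ℤ) : ℝ)) := by push_cast; linarith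
      exact_mod_cast this
    have I2 : beta 1 ≤ lam 1 := by
      have : (((beta 1 : ℤ) : ℝ)) ≤ (((lam 1 : ℤ) : ℝ)) := by push_cast; linarith
      exact_mod_cast this
    have I3 : lam 0 ≤ (beta 0 + beta 1) - lam 2 := by
      have : (((lam 0 : ℤ) : ℝ)) ≤ ((((beta 0 : ℤ) : ℝ) + ((beta 1 : ℤ) : ℝ)) - ((lam 2 : ℤ) : ℝ)) := by push_cast; linarith
      exact_mod_cast this
    have I4 : lam 1 ≤ lam 0 := by
      have : (((lam 1 : ℤ) : ℝ)) ≤ (((lam 0 : ℤ) : ℝ)) := by push_cast; linarith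
      exact_mod_cast this
    rw [gtMult_eq lam beta hl hb]
    omega
  · rintro ⟨d₁, d₂, d₃, d₄, h₁, h₂, h₃, h₄, heq⟩
    have E0 := congrFun heq 0
    have E1 := congrFun heq 1
    have E2 := congrFun heq 2
    have E3 := congrFun heq 3
    have E4 := congrFun heq 4
    have E5 := congrFun heq 5
    simp [z, b, a₁, c₂, c₃] at E0 E1 E2 E3 E4 E5
    have I0 : lam 1 ≤ beta 0 := by
      have : (((lam 1 : ℤ) : ℝ)) ≤ (((beta 0 : ℤ) : ℝ)) := by push_cast; linarith
      exact_mod_cast this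
    have I1 : (beta 0 + beta 1) - lam 1 ≤ beta 0 := by
      have : ((((beta 0 : ℤ) : ℝ) + ((beta 1 : ℤ) : ℝ)) - ((lam 1 : ℤ) : ℝ)) ≤ (((beta 0 : ℤ) : ℝ)) := by push_cast; linarith
      exact_mod_cast this
    have I2 : beta 1 ≤ beta 0 := by
      have : (((beta 1 : ℤ) : ℝ)) ≤ (((beta 0 : ℤ) : ℝ)) := by push_cast; linarith
      exact_mod_cast this
    have I3 : lam 0 ≤ (beta 0 + beta 1) - lam 2 := by
      have : (((lam 0 : ℤ) : ℝ)) ≤ ((((beta 0 : ℤ) : ℝ) + ((beta 1 : ℤ) : ℝ)) - ((lam 2 : ℤ) : ℝ)) := by push_cast; linarith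
      exact_mod_cast this
    have I4 : beta 0 ≤ lam 0 := by
      have : (((beta 0 : ℤ) : ℝ)) ≤ (((lam 0 : ℤ) : ℝ)) := by push_cast; linarith
      exact_mod_cast this
    rw [gtMult_eq lam beta hl hb]
    omega
  · rintro ⟨d₁, d₂, d₃, d₄, h₁, h₂, h₃, h₄, heq⟩
    have E0 := congrFun heq 0
    have E1 := congrFun heq 1
    have E2 := congrFun heq 2
    have E3 := congrFun heq 3
    have E4 := congrFun heq 4
    have E5 := congrFun heq 5
    simp [z, b, a₂, c₁, c₃] at E0 E1 E2 E3 E4 E5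
    have I0 : lam 1 ≤ beta 1 := by
      have : (((lam 1 : ℤ) : ℝ)) ≤ (((beta 1 : ℤ) : ℝ)) := by push_cast; linarith
      exact_mod_cast this
    have I1 : (beta 0 + beta 1) - lam 1 ≤ beta 1 := by
      have : ((((beta 0 : ℤ) : ℝ) + ((beta 1 : ℤ) : ℝ)) - ((lam 1 : ℤ) : ℝ)) ≤ (((beta 1 : ℤ) : ℝ)) := by push_cast; linarith
      exact_mod_cast this
    have I2 : beta 0 ≤ beta 1 := by
      have : (((beta 0 : ℤ) : ℝ)) ≤ (((beta 1 : ℤ) : ℝ)) := by push_cast; linarith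
      exact_mod_cast this
    have I3 : lam 0 ≤ (beta 0 + beta 1) - lam 2 := by
      have : (((lam 0 : ℤ) : ℝ)) ≤ ((((beta 0 : ℤ) : ℝ) + ((beta 1 : ℤ) : ℝ)) - ((lam 2 : ℤ) : ℝ)) := by push_cast; linarith
      exact_mod_cast this
    have I4 : beta 1 ≤ lam 0 := by
      have : (((beta 1 : ℤ) : ℝ)) ≤ (((lam 0 : ℤ) : ℝ)) := by push_cast; linarith
      exact_mod_cast this
    rw [gtMult_eq lam beta hl hb]
    omega
  · rintro ⟨d₁, d₂, d₃, d₄, h₁, h₂, h₃, h₄, heq⟩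
    have E0 := congrFun heq 0
    have E1 := congrFun heq 1
    have E2 := congrFun heq 2
    have E3 := congrFun heq 3
    have E4 := congrFun heq 4
    have E5 := congrFun heq 5
    simp [z, b, a₃, c₁, c₂] at E0 E1 E2 E3 E4 E5
    have I0 : (beta 0 + beta 1) - lam 1 ≤ lam 1 := by
      have : ((((beta 0 : ℤ) : ℝ) + ((beta 1 : ℤ) : ℝ)) - ((lam 1 : ℤ) : ℝ)) ≤ (((lam 1 : ℤ) : ℝ)) := by push_cast; linarith
      exact_mod_cast this
    have I1 : beta 0 ≤ lam 1 := by
      have : (((beta 0 : ℤ) : ℝ)) ≤ (((lam 1 : ℤ) : ℝ)) := by push_cast; linarith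
      exact_mod_cast this
    have I2 : beta 1 ≤ lam 1 := by
      have : (((beta 1 : ℤ) : ℝ)) ≤ (((lam 1 : ℤ) : ℝ)) := by push_cast; linarith
      exact_mod_cast this
    have I3 : (beta 0 + beta 1) - lam 2 ≤ lam 0 := by
      have : ((((beta 0 : ℤ) : ℝ) + ((beta 1 : ℤ) : ℝ)) - ((lam 2 : ℤ) : ℝ)) ≤ (((lam 0 : ℤ) : ℝ)) := by push_cast; linarith
      exact_mod_cast this
    have I4 : lam 1 ≤ (beta 0 + beta 1) - lam 2 := by
      have : (((lam 1 : ℤ) : ℝ)) ≤ ((((beta 0 : ℤ) : ℝ) + ((beta 1 : ℤ) : ℝ)) - ((lam 2 : ℤ) : ℝ)) := by push_cast; linarith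
      exact_mod_cast this
    rw [gtMult_eq lam beta hl hb]
    omega
  · rintro ⟨d₁, d₂, d₃, d₄, h₁, h₂, h₃, h₄, heq⟩
    have E0 := congrFun heq 0
    have E1 := congrFun heq 1
    have E2 := congrFun heq 2
    have E3 := congrFun heq 3
    have E4 := congrFun heq 4
    have E5 := congrFun heq 5
    simp [z, b, a₁, a₂, c₃] at E0 E1 E2 E3 E4 E5
    have I0 : lam 1 ≤ (beta 0 + beta 1) - lam 1 := by
      have : (((lam 1 : ℤ) : ℝ)) ≤ ((((beta 0 : ℤ) : ℝ) + ((beta 1 : ℤ) : ℝ)) - ((lam 1 : ℤ) : ℝ)) := by push_cast; linarith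
      exact_mod_cast this
    have I1 : beta 0 ≤ (beta 0 + beta 1) - lam 1 := by
      have : (((beta 0 : ℤ) : ℝ)) ≤ ((((beta 0 : ℤ) : ℝ) + ((beta 1 : ℤ) : ℝ)) - ((lam 1 : ℤ) : ℝ)) := by push_cast; linarith
      exact_mod_cast this
    have I2 : beta 1 ≤ (beta 0 + beta 1) - lam 1 := by
      have : (((beta 1 : ℤ) : ℝ)) ≤ ((((beta 0 : ℤ) : ℝ) + ((beta 1 : ℤ) : ℝ)) - ((lam 1 : ℤ) : ℝ)) := by push_cast; linarith
      exact_mod_cast this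
    have I3 : lam 0 ≤ (beta 0 + beta 1) - lam 2 := by
      have : (((lam 0 : ℤ) : ℝ)) ≤ ((((beta 0 : ℤ) : ℝ) + ((beta 1 : ℤ) : ℝ)) - ((lam 2 : ℤ) : ℝ)) := by push_cast; linarith
      exact_mod_cast this
    have I4 : (beta 0 + beta 1) - lam 1 ≤ lam 0 := by
      have : ((((beta 0 : ℤ) : ℝ) + ((beta 1 : ℤ) : ℝ)) - ((lam 1 : ℤ) : ℝ)) ≤ (((lam 0 : ℤ) : ℝ)) := by push_cast; linarith
      exact_mod_cast this
    rw [gtMult_eq lam beta hl hb]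
    omega
  · rintro ⟨d₁, d₂, d₃, d₄, h₁, h₂, h₃, h₄, heq⟩
    have E0 := congrFun heq 0
    have E1 := congrFun heq 1
    have E2 := congrFun heq 2
    have E3 := congrFun heq 3
    have E4 := congrFun heq 4
    have E5 := congrFun heq 5
    simp [z, b, a₁, a₃, c₂] at E0 E1 E2 E3 E4 E5
    have I0 : lam 1 ≤ beta 0 := by
      have : (((lam 1 : ℤ) : ℝ)) ≤ (((beta 0 : ℤ) : ℝ)) := by push_cast; linarith
      exact_mod_cast this
    have I1 : (beta 0 + beta 1) - lam 1 ≤ beta 0 := by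
      have : ((((beta 0 : ℤ) : ℝ) + ((beta 1 : ℤ) : ℝ)) - ((lam 1 : ℤ) : ℝ)) ≤ (((beta 0 : ℤ) : ℝ)) := by push_cast; linarith
      exact_mod_cast this
    have I2 : beta 1 ≤ beta 0 := by
      have : (((beta 1 : ℤ) : ℝ)) ≤ (((beta 0 : ℤ) : ℝ)) := by push_cast; linarith
      exact_mod_cast this
    have I3 : (beta 0 + beta 1) - lam 2 ≤ lam 0 := by
      have : ((((beta 0 : ℤ) : ℝ) + ((beta 1 : ℤ) : ℝ)) - ((lam 2 : ℤ) : ℝ)) ≤ (((lam 0 : ℤ) : ℝ)) := by push_cast; linarith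
      exact_mod_cast this
    have I4 : beta 0 ≤ (beta 0 + beta 1) - lam 2 := by
      have : (((beta 0 : ℤ) : ℝ)) ≤ ((((beta 0 : ℤ) : ℝ) + ((beta 1 : ℤ) : ℝ)) - ((lam 2 : ℤ) : ℝ)) := by push_cast; linarith
      exact_mod_cast this
    rw [gtMult_eq lam beta hl hb]
    omega
  · rintro ⟨d₁, d₂, d₃, d₄, h₁, h₂, h₃, h₄, heq⟩
    have E0 := congrFun heq 0
    have E1 := congrFun heq 1
    have E2 := congrFun heq 2
    have E3 := congrFun heq 3
    have E4 := congrFun heq 4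
    have E5 := congrFun heq 5
    simp [z, b, a₂, a₃, c₁] at E0 E1 E2 E3 E4 E5
    have I0 : lam 1 ≤ beta 1 := by
      have : (((lam 1 : ℤ) : ℝ)) ≤ (((beta 1 : ℤ) : ℝ)) := by push_cast; linarith
      exact_mod_cast this
    have I1 : (beta 0 + beta 1) - lam 1 ≤ beta 1 := by
      have : ((((beta 0 : ℤ) : ℝ) + ((beta 1 : ℤ) : ℝ)) - ((lam 1 : ℤ) : ℝ)) ≤ (((beta 1 : ℤ) : ℝ)) := by push_cast; linarith
      exact_mod_cast this
    have I2 : beta 0 ≤ beta 1 := by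
      have : (((beta 0 : ℤ) : ℝ)) ≤ (((beta 1 : ℤ) : ℝ)) := by push_cast; linarith
      exact_mod_cast this
    have I3 : (beta 0 + beta 1) - lam 2 ≤ lam 0 := by
      have : ((((beta 0 : ℤ) : ℝ) + ((beta 1 : ℤ) : ℝ)) - ((lam 2 : ℤ) : ℝ)) ≤ (((lam 0 : ℤ) : ℝ)) := by push_cast; linarith
      exact_mod_cast this
    have I4 : beta 1 ≤ (beta 0 + beta 1) - lam 2 := by
      have : (((beta 1 : ℤ) : ℝ)) ≤ ((((beta 0 : ℤ) : ℝ) + ((beta 1 : ℤ) : ℝ)) - ((lam 2 : ℤ) : ℝ)) := by push_cast; linarith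
      exact_mod_cast this
    rw [gtMult_eq lam beta hl hb]
    omega
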